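/- For every natural number k ≥ 1, the trace tr(H_sᵏ) is divisible by s(s+1)(2s+1) as a polynomial in s; more concretely, there is a polynomial P_k in s (with coefficients polynomial in a₁,a₂,a₃) of degree 2k-2 such that tr(H_sᵏ) = s(s+1)(2s+1)·P_k(s) for all nonnegative integers s. -/

import Mathlib

/-- Quantum Euler top matrix in the spin-`s` representation:
indices `i : Fin (2*s+1)` correspond to `j = i - s ∈ {-s,...,s}`. -/
noncomputable def Hmat (s : ℕ) (a1 a2 a3 : ℝ) :
    Matrix (Fin (2 * s + 1)) (Fin (2 * s + 1)) ℝ :=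
  Matrix.of fun i i' =>
    let j : ℝ := (i : ℕ) - (s : ℝ)
    let j' : ℝ := (i' : ℕ) - (s : ℝ)
    if i = i' then (a1 + a2) / 2 * ((s : ℝ) * ((s : ℝ) + 1) - j ^ 2) + a3 * j ^ 2
    else if (i' : ℕ) = (i : ℕ) + 2 then
      (a1 - a2) / 4 *
        Real.sqrt (((s : ℝ) - j) * ((s : ℝ) - j - 1) * ((s : ℝ) + j + 1) * ((s : ℝ) + j + 2))
    else if (i : ℕ) = (i' : ℕ) + 2 then
      (a1 - a2) / 4 *
        Real.sqrt (((s : ℝ) - j') * ((s : ℝ) - j' - 1) * ((s : ℝ) + j' + 1) * ((s : ℝ) + j' + 2))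
    else 0


open Polynomial
noncomputable section
namespace QTop
abbrev A := Polynomial (Polynomial ℝ)
def K (r : ℝ) : A := C (C r)
def Xs : A := C X
def Yi : A := (X : A)
def evh (s i : ℝ) : A →+* ℝ :=
  (Polynomial.evalRingHom i).comp (Polynomial.mapRingHom (Polynomial.evalRingHom s))
def ev (a : A) (s i : ℝ) : ℝ := evh s i a
@[simp] lemma ev_K (r s i : ℝ) : ev (K r) s i = r := by simp [ev, evh, K]
@[simp] lemma ev_Xs (s i : ℝ) : ev Xs s i = s := by simp [ev, evh, Xs]
@[simp] lemma ev_Yi (s i : ℝ) : ev Yi s i = i := by simp [ev, evh, Yi]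
@[simp] lemma ev_add (a b : A) (s i : ℝ) : ev (a + b) s i = ev a s i + ev b s i := map_add _ _ _
@[simp] lemma ev_mul (a b : A) (s i : ℝ) : ev (a * b) s i = ev a s i * ev b s i := map_mul _ _ _
@[simp] lemma ev_sub (a b : A) (s i : ℝ) : ev (a - b) s i = ev a s i - ev b s i := map_sub _ _ _
@[simp] lemma ev_pow (a : A) (n : ℕ) (s i : ℝ) : ev (a ^ n) s i = (ev a s i) ^ n := map_pow _ _ _
@[simp] lemma ev_one (s i : ℝ) : ev 1 s i = 1 := map_one _
@[simp] lemma ev_zero (s i : ℝ) : ev 0 s i = 0 := map_zero _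
variable (a1 a2 a3 : ℝ)
def cP : ℝ := (a1 - a2) / 4
def DAt (d : ℤ) : A :=
  K ((a1 + a2) / 2) * (Xs * (Xs + K 1) - (Yi + K (d : ℝ) - Xs) ^ 2)
    + K a3 * (Yi + K (d : ℝ) - Xs) ^ 2
def upAt (d : ℤ) : A :=
  K (cP a1 a2) * (K 2 * Xs - (Yi + K (d : ℝ))) * (K 2 * Xs - (Yi + K (d : ℝ)) - K 1)
def loAt (d : ℤ) : A :=
  K (cP a1 a2) * (Yi + K (d : ℝ) - K 1) * (Yi + K (d : ℝ))
lemma ev_DAt (d : ℤ) (s i : ℝ) :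
    ev (DAt a1 a2 a3 d) s i
      = (a1 + a2) / 2 * (s * (s + 1) - (i + (d : ℝ) - s) ^ 2) + a3 * (i + (d : ℝ) - s) ^ 2 := by
  simp [DAt]
lemma ev_upAt (d : ℤ) (s i : ℝ) :
    ev (upAt a1 a2 d) s i = cP a1 a2 * (2 * s - (i + (d : ℝ))) * (2 * s - (i + (d : ℝ)) - 1) := by
  simp [upAt]
lemma ev_loAt (d : ℤ) (s i : ℝ) :
    ev (loAt a1 a2 d) s i = cP a1 a2 * (i + (d : ℝ) - 1) * (i + (d : ℝ)) := by
  simp [loAt]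
def Q : ℕ → ℤ → A
  | 0, d => if d = 0 then 1 else 0
  | (k + 1), d =>
      Q k d * DAt a1 a2 a3 d + Q k (d - 2) * upAt a1 a2 (d - 2)
        + Q k (d + 2) * loAt a1 a2 (d + 2)

lemma lower_vanish : ∀ (k : ℕ) (e : ℤ) (s : ℝ) (i : ℤ), 0 ≤ i → i + e < 0 →
    ev (Q a1 a2 a3 k e) s i = 0 := by
  intro k
  induction k with
  | zero =>
    intro e s i hi h
    have : e ≠ 0 := by omega
    simp [Q, this]
  | succ k ih =>
    intro e s i hi h
    rw [Q]
    simp only [ev_add, ev_mul]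
    rw [ih e s i hi h, ih (e - 2) s i hi (by omega)]
    rcases lt_or_ge (i + (e + 2)) 0 with h2 | h2
    · rw [ih (e + 2) s i hi h2]; ring
    · have he : i + e = -1 ∨ i + e = -2 := by omega
      have : ev (loAt a1 a2 (e + 2)) s i = 0 := by
        rw [ev_loAt]
        rcases he with he | he
        · have : ((i : ℝ) + ((e : ℝ) + 2)) - 1 = 0 := by
            have : ((i + e : ℤ) : ℝ) = -1 := by rw [he]; norm_num
            push_cast at this ⊢; linarith
          push_cast at this ⊢
          rw [mul_assoc, this]; ring
        · have : ((i : ℝ) + ((e : ℝ) + 2)) = 0 := by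
            have : ((i + e : ℤ) : ℝ) = -2 := by rw [he]; norm_num
            push_cast at this ⊢; linarith
          push_cast at this ⊢
          rw [this]; ring
      rw [this]; ring

lemma upper_vanish : ∀ (k : ℕ) (e : ℤ) (s : ℕ) (i : ℤ), i ≤ 2 * s → 2 * (s : ℤ) < i + e →
    ev (Q a1 a2 a3 k e) s i = 0 := by
  intro k
  induction k with
  | zero =>
    intro e s i hi h
    have : e ≠ 0 := by omega
    simp [Q, this]
  | succ k ih =>
    intro e s i hi h
    rw [Q]
    simp only [ev_add, ev_mul]
    rw [ih e s i hi h, ih (e + 2) s i hi (by omega)]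
    rcases lt_or_ge (2 * (s : ℤ)) (i + (e - 2)) with h2 | h2
    · rw [ih (e - 2) s i hi h2]; ring
    · have he : i + e = 2 * s + 1 ∨ i + e = 2 * s + 2 := by omega
      have : ev (upAt a1 a2 (e - 2)) s i = 0 := by
        rw [ev_upAt]
        rcases he with he | he
        · have h3 : ((i + e : ℤ) : ℝ) = 2 * s + 1 := by rw [he]; push_cast; ring
          push_cast at h3 ⊢
          have : 2 * (s : ℝ) - ((i : ℝ) + ((e : ℝ) - 2)) - 1 = 0 := by linarith
          rw [this]; ring
        · have h3 : ((i + e : ℤ) : ℝ) = 2 * s + 2 := by rw [he]; push_cast; ring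
          push_cast at h3 ⊢
          have : 2 * (s : ℝ) - ((i : ℝ) + ((e : ℝ) - 2)) = 0 := by linarith
          rw [this]; ring
      rw [this]; ring

lemma key_vanish (k : ℕ) : ev (Q a1 a2 a3 (k + 1) 0) (-1) (-1) = 0 := by
  rw [Q]
  simp only [ev_add, ev_mul]
  have h1 : ev (DAt a1 a2 a3 0) (-1) (-1) = 0 := by rw [ev_DAt]; norm_num
  have h2 : ev (upAt a1 a2 (0 - 2)) (-1) (-1) = 0 := by rw [ev_upAt]; norm_num
  have h3 : ev (loAt a1 a2 (0 + 2)) (-1) (-1) = 0 := by rw [ev_loAt]; norm_num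
  rw [h1, h2, h3]; ring


/-! ### total degree machinery -/

def TD (a : A) (n : ℕ) : Prop := ∀ m, a.coeff m ≠ 0 → (a.coeff m).natDegree + m ≤ n

lemma TD_zero (n : ℕ) : TD 0 n := by intro m h; simp at h

lemma TD_K (r : ℝ) : TD (K r) 0 := by
  intro m h
  rcases Nat.eq_zero_or_pos m with hm | hm
  · subst hm; simp [K, Polynomial.coeff_C]
  · exfalso; apply h
    have hm' : m ≠ 0 := by omega
    simp [K, Polynomial.coeff_C, hm']
lemma TD_one : TD 1 0 := by
  have : (1 : A) = K 1 := by simp [K]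
  rw [this]; exact TD_K 1

lemma TD_Xs : TD Xs 1 := by
  intro m h
  rcases Nat.eq_zero_or_pos m with hm | hm
  · subst hm; simp [Xs, Polynomial.coeff_C, Polynomial.natDegree_X]
  · exfalso; apply h; simp [Xs, Polynomial.coeff_C]; omega

lemma TD_Yi : TD Yi 1 := by
  intro m h
  by_cases hm : m = 1
  · subst hm; simp [Yi, Polynomial.coeff_X]
  · exfalso; apply h; simp [Yi, Polynomial.coeff_X, hm]
    intro h'; exact absurd h'.symm hm

lemma TD_mono {a : A} {n n' : ℕ} (h : TD a n) (hn : n ≤ n') : TD a n' := by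
  intro m hm; exact le_trans (h m hm) hn

lemma TD_add {a b : A} {n : ℕ} (ha : TD a n) (hb : TD b n) : TD (a + b) n := by
  intro m hm
  rw [Polynomial.coeff_add] at hm ⊢
  by_cases h1 : a.coeff m = 0
  · rw [h1, zero_add] at hm ⊢
    exact hb m hm
  · by_cases h2 : b.coeff m = 0
    · rw [h2, add_zero] at hm ⊢
      exact ha m hm
    · have h3 := ha m h1
      have h4 := hb m h2
      have h5 := Polynomial.natDegree_add_le (a.coeff m) (b.coeff m)
      have h6 : max (a.coeff m).natDegree (b.coeff m).natDegree + m ≤ n := by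
        rcases max_cases ((a.coeff m).natDegree) ((b.coeff m).natDegree) with ⟨h,_⟩|⟨h,_⟩ <;> omega
      omega

lemma TD_neg {a : A} {n : ℕ} (ha : TD a n) : TD (-a) n := by
  intro m hm
  rw [Polynomial.coeff_neg] at hm ⊢
  rw [Polynomial.natDegree_neg]
  exact ha m (by simpa using hm)

lemma TD_sub {a b : A} {n : ℕ} (ha : TD a n) (hb : TD b n) : TD (a - b) n := by
  rw [sub_eq_add_neg]; exact TD_add ha (TD_neg hb)

lemma TD_mul {a b : A} {n1 n2 : ℕ} (ha : TD a n1) (hb : TD b n2) : TD (a * b) (n1 + n2) := by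
  intro m hm
  rw [Polynomial.coeff_mul] at hm ⊢
  by_cases hmle : m ≤ n1 + n2
  · have : ((Finset.HasAntidiagonal.antidiagonal m).sum fun p => a.coeff p.1 * b.coeff p.2).natDegree
        ≤ n1 + n2 - m := by
      apply Polynomial.natDegree_sum_le_of_forall_le
      intro p hp
      have hpm : p.1 + p.2 = m := Finset.HasAntidiagonal.mem_antidiagonal.mp hp
      by_cases h1 : a.coeff p.1 = 0
      · rw [h1, zero_mul]; simp
      · by_cases h2 : b.coeff p.2 = 0
        · rw [h2, mul_zero]; simp
        · have g1 := ha p.1 h1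
          have g2 := hb p.2 h2
          have := Polynomial.natDegree_mul_le (p := a.coeff p.1) (q := b.coeff p.2)
          omega
    omega
  · exfalso; apply hm
    apply Finset.sum_eq_zero
    intro p hp
    have hpm : p.1 + p.2 = m := Finset.HasAntidiagonal.mem_antidiagonal.mp hp
    by_cases h1 : a.coeff p.1 = 0
    · rw [h1, zero_mul]
    · by_cases h2 : b.coeff p.2 = 0
      · rw [h2, mul_zero]
      · exfalso
        have g1 := ha p.1 h1
        have g2 := hb p.2 h2
        omega

lemma TD_DAt (d : ℤ) : TD (DAt a1 a2 a3 d) 2 := by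
  have hj : TD (Yi + K (d : ℝ) - Xs) 1 :=
    TD_sub (TD_add TD_Yi (TD_mono (TD_K _) (by norm_num))) TD_Xs
  have hj2 : TD ((Yi + K (d : ℝ) - Xs) ^ 2) 2 := by
    rw [sq]; exact TD_mul hj hj
  apply TD_add
  · have : TD (Xs * (Xs + K 1) - (Yi + K (d : ℝ) - Xs) ^ 2) 2 :=
      TD_sub (TD_mul TD_Xs (TD_add TD_Xs (TD_mono (TD_K _) (by norm_num)))) hj2
    have := TD_mul (TD_K ((a1 + a2)/2)) this
    simpa using this
  · have := TD_mul (TD_K a3) hj2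
    simpa using this

lemma TD_upAt (d : ℤ) : TD (upAt a1 a2 d) 2 := by
  have h1 : TD (K 2 * Xs - (Yi + K (d : ℝ))) 1 := by
    apply TD_sub
    · have := TD_mul (TD_K 2) TD_Xs; simpa using this
    · exact TD_add TD_Yi (TD_mono (TD_K _) (by norm_num))
  have h2 : TD (K 2 * Xs - (Yi + K (d : ℝ)) - K 1) 1 :=
    TD_sub h1 (TD_mono (TD_K _) (by norm_num))
  have := TD_mul (TD_mul (TD_K (cP a1 a2)) h1) h2
  simpa [upAt] using this

lemma TD_loAt (d : ℤ) : TD (loAt a1 a2 d) 2 := by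
  have h1 : TD (Yi + K (d : ℝ) - K 1) 1 :=
    TD_sub (TD_add TD_Yi (TD_mono (TD_K _) (by norm_num))) (TD_mono (TD_K _) (by norm_num))
  have h2 : TD (Yi + K (d : ℝ)) 1 := TD_add TD_Yi (TD_mono (TD_K _) (by norm_num))
  have := TD_mul (TD_mul (TD_K (cP a1 a2)) h1) h2
  simpa [loAt] using this

lemma TD_Q (k : ℕ) : ∀ d, TD (Q a1 a2 a3 k d) (2 * k) := by
  induction k with
  | zero =>
    intro d
    by_cases hd : d = 0 <;> simp [Q, hd]
    · exact TD_one
    · exact TD_zero 0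
  | succ k ih =>
    intro d
    rw [Q]
    have h2 : 2 * (k + 1) = 2 * k + 2 := by ring
    rw [h2]
    exact TD_add (TD_add (TD_mul (ih d) (TD_DAt a1 a2 a3 _))
      (TD_mul (ih (d - 2)) (TD_upAt a1 a2 _))) (TD_mul (ih (d + 2)) (TD_loAt a1 a2 _))


/-! ### the conjugated matrix and entries of its powers -/

def Mmat (s : ℕ) : Matrix (Fin (2 * s + 1)) (Fin (2 * s + 1)) ℝ :=
  Matrix.of fun i i' =>
    if i = i' then
      (a1 + a2) / 2 * ((s : ℝ) * ((s : ℝ) + 1) - (((i : ℕ) : ℝ) - (s : ℝ)) ^ 2)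
        + a3 * (((i : ℕ) : ℝ) - (s : ℝ)) ^ 2
    else if (i' : ℕ) = (i : ℕ) + 2 then
      cP a1 a2 * (2 * (s : ℝ) - ((i : ℕ) : ℝ)) * (2 * (s : ℝ) - ((i : ℕ) : ℝ) - 1)
    else if (i : ℕ) = (i' : ℕ) + 2 then
      cP a1 a2 * (((i : ℕ) : ℝ) - 1) * ((i : ℕ) : ℝ)
    else 0

lemma pow_entry (s : ℕ) (k : ℕ) :
    ∀ i i' : Fin (2 * s + 1),
      ((Mmat a1 a2 a3 s) ^ k) i i'
        = ev (Q a1 a2 a3 k (((i' : ℕ) : ℤ) - ((i : ℕ) : ℤ))) s i := by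
  induction k with
  | zero =>
    intro i i'
    by_cases h : i = i'
    · subst h
      simp [Q, Matrix.one_apply]
    · have hne : (((i' : ℕ) : ℤ) - ((i : ℕ) : ℤ)) ≠ 0 := by
        intro hc
        apply h
        have : (i : ℕ) = (i' : ℕ) := by omega
        exact Fin.ext this
      simp [Q, Matrix.one_apply, h, hne]
  | succ k ih =>
    intro i i'
    set d : ℤ := ((i' : ℕ) : ℤ) - ((i : ℕ) : ℤ) with hd
    rw [pow_succ, Matrix.mul_apply]
    -- split each summand into three pieces
    have hsplit : ∀ i'' : Fin (2 * s + 1),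
        ((Mmat a1 a2 a3 s) ^ k) i i'' * (Mmat a1 a2 a3 s) i'' i'
          = (if i'' = i' then ((Mmat a1 a2 a3 s) ^ k) i i''
                * ((a1 + a2) / 2 * ((s : ℝ) * ((s : ℝ) + 1) - (((i' : ℕ) : ℝ) - (s : ℝ)) ^ 2)
                   + a3 * (((i' : ℕ) : ℝ) - (s : ℝ)) ^ 2) else 0)
            + (if (i' : ℕ) = (i'' : ℕ) + 2 then ((Mmat a1 a2 a3 s) ^ k) i i''
                * (cP a1 a2 * (2 * (s : ℝ) - ((i'' : ℕ) : ℝ))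
                    * (2 * (s : ℝ) - ((i'' : ℕ) : ℝ) - 1)) else 0)
            + (if (i'' : ℕ) = (i' : ℕ) + 2 then ((Mmat a1 a2 a3 s) ^ k) i i''
                * (cP a1 a2 * (((i'' : ℕ) : ℝ) - 1) * ((i'' : ℕ) : ℝ)) else 0) := by
      intro i''
      rw [Mmat]
      simp only [Matrix.of_apply]
      by_cases h1 : i'' = i'
      · subst h1
        have h2 : ¬ ((i'' : ℕ) = (i'' : ℕ) + 2) := by omega
        rw [if_pos rfl, if_pos rfl, if_neg h2, if_neg h2]
        ring
      · by_cases h2 : (i' : ℕ) = (i'' : ℕ) + 2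
        · have h3 : ¬ ((i'' : ℕ) = (i' : ℕ) + 2) := by omega
          rw [if_neg h1, if_pos h2, if_neg h1, if_pos h2, if_neg h3]
          ring
        · by_cases h3 : (i'' : ℕ) = (i' : ℕ) + 2
          · rw [if_neg h1, if_neg h2, if_pos h3, if_neg h1, if_neg h2, if_pos h3]
            ring
          · rw [if_neg h1, if_neg h2, if_neg h3, if_neg h1, if_neg h2, if_neg h3]
            ring
    rw [Finset.sum_congr rfl (fun i'' _ => hsplit i'')]
    rw [Finset.sum_add_distrib, Finset.sum_add_distrib]
    -- term 1
    have t1 : (∑ i'' : Fin (2 * s + 1), if i'' = i' then ((Mmat a1 a2 a3 s) ^ k) i i''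
                * ((a1 + a2) / 2 * ((s : ℝ) * ((s : ℝ) + 1) - (((i' : ℕ) : ℝ) - (s : ℝ)) ^ 2)
                   + a3 * (((i' : ℕ) : ℝ) - (s : ℝ)) ^ 2) else 0)
        = ev (Q a1 a2 a3 k d) s i * ev (DAt a1 a2 a3 d) s i := by
      rw [Finset.sum_ite_eq' Finset.univ i']
      simp only [Finset.mem_univ, if_true]
      rw [ih i i', ev_DAt]
      have : ((i : ℕ) : ℝ) + ((d : ℤ) : ℝ) = ((i' : ℕ) : ℝ) := by
        rw [hd]; push_cast; ring
      rw [this]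
    -- term 2 (up entries)
    have t2 : (∑ i'' : Fin (2 * s + 1), if (i' : ℕ) = (i'' : ℕ) + 2 then
                ((Mmat a1 a2 a3 s) ^ k) i i''
                * (cP a1 a2 * (2 * (s : ℝ) - ((i'' : ℕ) : ℝ))
                    * (2 * (s : ℝ) - ((i'' : ℕ) : ℝ) - 1)) else 0)
        = ev (Q a1 a2 a3 k (d - 2)) s i * ev (upAt a1 a2 (d - 2)) s i := by
      by_cases hc : 2 ≤ (i' : ℕ)
      · have hlt : (i' : ℕ) - 2 < 2 * s + 1 := by omega
        set j : Fin (2 * s + 1) := ⟨(i' : ℕ) - 2, hlt⟩ with hj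
        rw [Finset.sum_eq_single j]
        · have hcond : (i' : ℕ) = (j : ℕ) + 2 := by simp [hj]; omega
          rw [if_pos hcond]
          rw [ih i j, ev_upAt]
          have hdj : ((j : ℕ) : ℤ) - ((i : ℕ) : ℤ) = d - 2 := by
            simp [hj]; omega
          rw [hdj]
          have h5 : ((i : ℕ) : ℤ) + (d - 2) = ((j : ℕ) : ℤ) := by omega
          have : ((i : ℕ) : ℝ) + ((d : ℤ) - 2 : ℤ) = ((j : ℕ) : ℝ) := by
            exact_mod_cast h5
          rw [this]
        · intro b _ hb
          rw [if_neg]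
          intro hcond
          apply hb
          apply Fin.ext
          simp [hj]; omega
        · intro h; exact absurd (Finset.mem_univ j) h
      · rw [Finset.sum_eq_zero]
        · have : ev (Q a1 a2 a3 k (d - 2)) s i = 0 := by
            apply lower_vanish
            · exact_mod_cast Nat.zero_le _
            · omega
          rw [this]; ring
        · intro b _
          rw [if_neg]; omega
    -- term 3 (down entries)
    have t3 : (∑ i'' : Fin (2 * s + 1), if (i'' : ℕ) = (i' : ℕ) + 2 then
                ((Mmat a1 a2 a3 s) ^ k) i i''
                * (cP a1 a2 * (((i'' : ℕ) : ℝ) - 1) * ((i'' : ℕ) : ℝ)) else 0)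
        = ev (Q a1 a2 a3 k (d + 2)) s i * ev (loAt a1 a2 (d + 2)) s i := by
      by_cases hc : (i' : ℕ) + 2 ≤ 2 * s
      · have hlt : (i' : ℕ) + 2 < 2 * s + 1 := by omega
        set j : Fin (2 * s + 1) := ⟨(i' : ℕ) + 2, hlt⟩ with hj
        rw [Finset.sum_eq_single j]
        · have hcond : (j : ℕ) = (i' : ℕ) + 2 := by simp [hj]
          rw [if_pos hcond]
          rw [ih i j, ev_loAt]
          have hdj : ((j : ℕ) : ℤ) - ((i : ℕ) : ℤ) = d + 2 := by
            simp [hj]; omega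
          rw [hdj]
          have h5 : ((i : ℕ) : ℤ) + (d + 2) = ((j : ℕ) : ℤ) := by omega
          have : ((i : ℕ) : ℝ) + ((d : ℤ) + 2 : ℤ) = ((j : ℕ) : ℝ) := by
            exact_mod_cast h5
          rw [this]
        · intro b _ hb
          rw [if_neg]
          intro hcond
          exact hb (Fin.ext (by simp [hj, hcond]))
        · intro h; exact absurd (Finset.mem_univ j) h
      · rw [Finset.sum_eq_zero]
        · have : ev (Q a1 a2 a3 k (d + 2)) s i = 0 := by
            apply upper_vanish
            · have := i.isLt; omega
            · omega
          rw [this]; ring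
        · intro b _
          rw [if_neg]
          have := b.isLt; omega
    rw [t1, t2, t3, Q]
    simp only [ev_add, ev_mul]

lemma trace_Mpow (s k : ℕ) :
    Matrix.trace ((Mmat a1 a2 a3 s) ^ k)
      = ∑ i ∈ Finset.range (2 * s + 1), ev (Q a1 a2 a3 k 0) s i := by
  rw [Matrix.trace]
  rw [← Fin.sum_univ_eq_sum_range (fun n => ev (Q a1 a2 a3 k 0) s n) (2 * s + 1)]
  apply Finset.sum_congr rfl
  intro i _
  rw [Matrix.diag_apply, pow_entry, sub_self]


/-! ### conjugation of `Hmat` into `Mmat` -/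

lemma choose_identity (s i : ℕ) (h : i + 2 ≤ 2 * s) :
    (i + 1) * (i + 2) * Nat.choose (2 * s) (i + 2)
      = (2 * s - i) * (2 * s - i - 1) * Nat.choose (2 * s) i := by
  have c1 := Nat.choose_succ_right_eq (2 * s) i
  have c2 := Nat.choose_succ_right_eq (2 * s) (i + 1)
  have e1 : 2 * s - (i + 1) = 2 * s - i - 1 := by omega
  rw [e1] at c2
  calc (i + 1) * (i + 2) * Nat.choose (2 * s) (i + 2)
      = (i + 1) * (Nat.choose (2 * s) (i + 1 + 1) * (i + 1 + 1)) := by ring_nf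
    _ = (i + 1) * (Nat.choose (2 * s) (i + 1) * (2 * s - i - 1)) := by rw [c2]
    _ = (2 * s - i - 1) * (Nat.choose (2 * s) (i + 1) * (i + 1)) := by ring
    _ = (2 * s - i - 1) * (Nat.choose (2 * s) i * (2 * s - i)) := by rw [c1]
    _ = (2 * s - i) * (2 * s - i - 1) * Nat.choose (2 * s) i := by ring

lemma cast_identity (s i : ℕ) (h : i + 2 ≤ 2 * s) :
    (((2 * s - i) * (2 * s - i - 1) : ℕ) : ℝ)
      = (2 * (s : ℝ) - (i : ℝ)) * (2 * (s : ℝ) - (i : ℝ) - 1) := by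
  have h1 : i ≤ 2 * s := by omega
  have h2 : 1 ≤ 2 * s - i := by omega
  push_cast [Nat.cast_sub h1, Nat.cast_sub h2]
  ring

lemma sqrt_step_up (s i : ℕ) (h : i + 2 ≤ 2 * s) :
    Real.sqrt ((((2 * s - i) * (2 * s - i - 1) : ℕ) : ℝ) * (((i + 1) * (i + 2) : ℕ) : ℝ))
        * Real.sqrt ((Nat.choose (2 * s) (i + 2) : ℝ))
      = Real.sqrt ((Nat.choose (2 * s) i : ℝ)) * (((2 * s - i) * (2 * s - i - 1) : ℕ) : ℝ) := by
  set u : ℕ := (2 * s - i) * (2 * s - i - 1) with hu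
  set v : ℕ := (i + 1) * (i + 2) with hv
  have key : (v * Nat.choose (2 * s) (i + 2) : ℕ) = (u * Nat.choose (2 * s) i : ℕ) := by
    rw [hu, hv]; exact choose_identity s i h
  rw [← Real.sqrt_mul (by positivity)]
  have : ((u : ℝ) * (v : ℝ)) * (Nat.choose (2 * s) (i + 2) : ℝ)
      = (u : ℝ) ^ 2 * (Nat.choose (2 * s) i : ℝ) := by
    have := congrArg (fun n : ℕ => (n : ℝ)) key
    push_cast at this
    nlinarith [this]
  rw [this, Real.sqrt_mul (by positivity), Real.sqrt_sq (by positivity)]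
  ring

lemma sqrt_step_lo (s i : ℕ) (h : i + 2 ≤ 2 * s) :
    Real.sqrt ((((2 * s - i) * (2 * s - i - 1) : ℕ) : ℝ) * (((i + 1) * (i + 2) : ℕ) : ℝ))
        * Real.sqrt ((Nat.choose (2 * s) i : ℝ))
      = Real.sqrt ((Nat.choose (2 * s) (i + 2) : ℝ)) * (((i + 1) * (i + 2) : ℕ) : ℝ) := by
  set u : ℕ := (2 * s - i) * (2 * s - i - 1) with hu
  set v : ℕ := (i + 1) * (i + 2) with hv
  have key : (u * Nat.choose (2 * s) i : ℕ) = (v * Nat.choose (2 * s) (i + 2) : ℕ) := by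
    rw [hu, hv]; exact (choose_identity s i h).symm
  rw [← Real.sqrt_mul (by positivity)]
  have : ((u : ℝ) * (v : ℝ)) * (Nat.choose (2 * s) i : ℝ)
      = (v : ℝ) ^ 2 * (Nat.choose (2 * s) (i + 2) : ℝ) := by
    have := congrArg (fun n : ℕ => (n : ℝ)) key
    push_cast at this
    nlinarith [this]
  rw [this, Real.sqrt_mul (by positivity), Real.sqrt_sq (by positivity)]
  ring

def Emat (s : ℕ) : Matrix (Fin (2 * s + 1)) (Fin (2 * s + 1)) ℝ :=
  Matrix.diagonal fun i => Real.sqrt (Nat.choose (2 * s) i)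

def Emat' (s : ℕ) : Matrix (Fin (2 * s + 1)) (Fin (2 * s + 1)) ℝ :=
  Matrix.diagonal fun i => (Real.sqrt (Nat.choose (2 * s) i))⁻¹

lemma sqrt_choose_ne (s : ℕ) (i : Fin (2 * s + 1)) :
    Real.sqrt (Nat.choose (2 * s) i) ≠ 0 := by
  have hle : (i : ℕ) ≤ 2 * s := by have := i.isLt; omega
  have := Nat.choose_pos hle
  positivity

lemma EE' (s : ℕ) : Emat s * Emat' s = 1 := by
  rw [Emat, Emat', Matrix.diagonal_mul_diagonal]
  have : (fun i : Fin (2 * s + 1) => Real.sqrt (Nat.choose (2 * s) i)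
      * (Real.sqrt (Nat.choose (2 * s) i))⁻¹) = fun _ => (1 : ℝ) :=
    funext fun i => mul_inv_cancel₀ (sqrt_choose_ne s i)
  rw [this, Matrix.diagonal_one]

lemma E'E (s : ℕ) : Emat' s * Emat s = 1 := by
  rw [Emat', Emat, Matrix.diagonal_mul_diagonal]
  have : (fun i : Fin (2 * s + 1) => (Real.sqrt (Nat.choose (2 * s) i))⁻¹
      * Real.sqrt (Nat.choose (2 * s) i)) = fun _ => (1 : ℝ) :=
    funext fun i => inv_mul_cancel₀ (sqrt_choose_ne s i)
  rw [this, Matrix.diagonal_one]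

lemma HE_eq_EM (s : ℕ) :
    Hmat s a1 a2 a3 * Emat s = Emat s * Mmat a1 a2 a3 s := by
  ext i i'
  rw [Emat, Matrix.mul_diagonal, Matrix.diagonal_mul]
  rw [Hmat, Mmat]
  simp only [Matrix.of_apply]
  by_cases h1 : i = i'
  · subst h1
    have h2 : ¬ ((i : ℕ) = (i : ℕ) + 2) := by omega
    rw [if_pos rfl, if_pos rfl]
    ring
  · have h1n : ¬ ((i : ℕ) = (i' : ℕ)) := fun hc => h1 (Fin.ext hc)
    by_cases h2 : (i' : ℕ) = (i : ℕ) + 2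
    · have h3 : ¬ ((i : ℕ) = (i' : ℕ) + 2) := by omega
      rw [if_neg h1, if_pos h2, if_neg h1, if_pos h2]
      have hle : (i : ℕ) + 2 ≤ 2 * s := by have := i'.isLt; omega
      have harg : ((s : ℝ) - (((i : ℕ) : ℝ) - (s : ℝ))) * ((s : ℝ) - (((i : ℕ) : ℝ) - (s : ℝ)) - 1)
            * ((s : ℝ) + (((i : ℕ) : ℝ) - (s : ℝ)) + 1) * ((s : ℝ) + (((i : ℕ) : ℝ) - (s : ℝ)) + 2)
          = (((2 * s - (i : ℕ)) * (2 * s - (i : ℕ) - 1) : ℕ) : ℝ)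
              * ((((i : ℕ) + 1) * ((i : ℕ) + 2) : ℕ) : ℝ) := by
        rw [cast_identity s i hle]
        push_cast
        ring
      rw [harg]
      have hC : ((i' : ℕ) : ℕ) = (i : ℕ) + 2 := h2
      rw [hC]
      have := sqrt_step_up s i hle
      rw [mul_assoc, this, cast_identity s i hle]
      simp only [cP]
      ring
    · by_cases h3 : (i : ℕ) = (i' : ℕ) + 2
      · rw [if_neg h1, if_neg h2, if_pos h3, if_neg h1, if_neg h2, if_pos h3]
        have hle : (i' : ℕ) + 2 ≤ 2 * s := by have := i.isLt; omega
        have harg : ((s : ℝ) - (((i' : ℕ) : ℝ) - (s : ℝ))) * ((s : ℝ) - (((i' : ℕ) : ℝ) - (s : ℝ)) - 1)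
              * ((s : ℝ) + (((i' : ℕ) : ℝ) - (s : ℝ)) + 1) * ((s : ℝ) + (((i' : ℕ) : ℝ) - (s : ℝ)) + 2)
            = (((2 * s - (i' : ℕ)) * (2 * s - (i' : ℕ) - 1) : ℕ) : ℝ)
                * ((((i' : ℕ) + 1) * ((i' : ℕ) + 2) : ℕ) : ℝ) := by
          rw [cast_identity s i' hle]
          push_cast
          ring
        rw [harg]
        have := sqrt_step_lo s i' hle
        rw [mul_assoc, this]
        have hC : (i : ℕ) = (i' : ℕ) + 2 := h3
        rw [hC]
        push_cast
        simp only [cP]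
        ring
      · rw [if_neg h1, if_neg h2, if_neg h3, if_neg h1, if_neg h2, if_neg h3]
        ring

lemma Mpow_conj (s : ℕ) : ∀ k : ℕ,
    (Mmat a1 a2 a3 s) ^ k = Emat' s * (Hmat s a1 a2 a3) ^ k * Emat s := by
  intro k
  induction k with
  | zero =>
    simp only [pow_zero, mul_one]
    exact (E'E s).symm
  | succ k ih =>
    have hM : Mmat a1 a2 a3 s = Emat' s * Hmat s a1 a2 a3 * Emat s := by
      rw [mul_assoc, HE_eq_EM, ← mul_assoc, E'E, one_mul]
    rw [pow_succ, ih, pow_succ, hM]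
    have h1 : Emat' s * Hmat s a1 a2 a3 ^ k * Emat s * (Emat' s * Hmat s a1 a2 a3 * Emat s)
        = Emat' s * Hmat s a1 a2 a3 ^ k * (Emat s * Emat' s) * Hmat s a1 a2 a3 * Emat s := by
      noncomm_ring
    rw [h1, EE', mul_one]
    noncomm_ring

lemma trace_conj (s k : ℕ) :
    Matrix.trace ((Hmat s a1 a2 a3) ^ k) = Matrix.trace ((Mmat a1 a2 a3 s) ^ k) := by
  rw [Mpow_conj]
  rw [show Emat' s * (Hmat s a1 a2 a3) ^ k * Emat s
      = Emat' s * ((Hmat s a1 a2 a3) ^ k * Emat s) by rw [mul_assoc]]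
  rw [Matrix.trace_mul_comm]
  rw [show (Hmat s a1 a2 a3) ^ k * Emat s * Emat' s
      = (Hmat s a1 a2 a3) ^ k * (Emat s * Emat' s) by rw [mul_assoc]]
  rw [EE', mul_one]


/-! ### Faulhaber polynomials -/

def FaulQ (m : ℕ) : Polynomial ℚ :=
  ∑ i ∈ Finset.range (m + 1),
    Polynomial.C (_root_.bernoulli i * ((m + 1).choose i) / (m + 1)) * Polynomial.X ^ (m + 1 - i)

lemma FaulQ_eval (m n : ℕ) : (FaulQ m).eval (n : ℚ) = ∑ j ∈ Finset.range n, (j : ℚ) ^ m := by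
  rw [sum_range_pow, FaulQ]
  rw [Polynomial.eval_finset_sum]
  apply Finset.sum_congr rfl
  intro i _
  rw [Polynomial.eval_mul, Polynomial.eval_C, Polynomial.eval_pow, Polynomial.eval_X]
  ring

def Faul (m : ℕ) : Polynomial ℝ := (FaulQ m).map (algebraMap ℚ ℝ)

lemma Faul_eval_nat (m n : ℕ) : (Faul m).eval ((n : ℕ) : ℝ) = ∑ j ∈ Finset.range n, (j : ℝ) ^ m := by
  rw [Faul]
  have h1 : ((n : ℕ) : ℝ) = algebraMap ℚ ℝ ((n : ℕ) : ℚ) := by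
    simp
  rw [h1, Polynomial.eval_map, Polynomial.eval₂_at_apply, FaulQ_eval]
  push_cast
  simp

lemma Faul_natDegree (m : ℕ) : (Faul m).natDegree ≤ m + 1 := by
  apply le_trans Polynomial.natDegree_map_le
  apply Polynomial.natDegree_sum_le_of_forall_le
  intro i _
  apply le_trans (Polynomial.natDegree_mul_le)
  have h1 : (Polynomial.C (_root_.bernoulli i * ((m + 1).choose i) / (m + 1))).natDegree = 0 :=
    Polynomial.natDegree_C _
  have h2 : ((Polynomial.X : Polynomial ℚ) ^ (m + 1 - i)).natDegree ≤ m + 1 := by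
    rw [Polynomial.natDegree_X_pow]
    omega
  omega

lemma Faul_comp_sub (m : ℕ) :
    (Faul m).comp (Polynomial.X + Polynomial.C 1) - Faul m = Polynomial.X ^ m := by
  have key : ∀ n : ℕ, ((Faul m).comp (Polynomial.X + Polynomial.C 1) - Faul m
      - Polynomial.X ^ m).eval ((n : ℕ) : ℝ) = 0 := by
    intro n
    rw [Polynomial.eval_sub, Polynomial.eval_sub, Polynomial.eval_comp]
    rw [Polynomial.eval_add, Polynomial.eval_X, Polynomial.eval_C]
    have h1 : ((n : ℕ) : ℝ) + 1 = ((n + 1 : ℕ) : ℝ) := by push_cast; ring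
    rw [h1, Faul_eval_nat, Faul_eval_nat, Polynomial.eval_pow, Polynomial.eval_X]
    rw [Finset.sum_range_succ]
    ring
  have hzero : (Faul m).comp (Polynomial.X + Polynomial.C 1) - Faul m - Polynomial.X ^ m = 0 := by
    apply Polynomial.eq_zero_of_infinite_isRoot
    apply Set.Infinite.mono (s := Set.range ((↑) : ℕ → ℝ))
    · intro x hx
      obtain ⟨n, rfl⟩ := hx
      exact key n
    · exact Set.infinite_range_of_injective Nat.cast_injective
  linear_combination hzero

lemma Faul_eval_zero (m : ℕ) : (Faul m).eval 0 = 0 := by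
  have := Faul_eval_nat m 0
  simpa using this

lemma Faul_eval_neg_one (m : ℕ) : (Faul m).eval (-1) = -(-1) ^ m := by
  have h := congrArg (Polynomial.eval (-1 : ℝ)) (Faul_comp_sub m)
  rw [Polynomial.eval_sub, Polynomial.eval_comp, Polynomial.eval_add, Polynomial.eval_X,
    Polynomial.eval_C, Polynomial.eval_pow, Polynomial.eval_X] at h
  have h2 : (-1 : ℝ) + 1 = 0 := by norm_num
  rw [h2, Faul_eval_zero] at h
  linarith [h]

/-! ### evaluation of an element of `A` as a finite coefficient sum -/

lemma ev_eq_sum (a : A) (s i : ℝ) :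
    ev a s i = ∑ m ∈ Finset.range (a.natDegree + 1), (a.coeff m).eval s * i ^ m := by
  have hrfl : ev a s i = (a.map (Polynomial.evalRingHom s)).eval i := rfl
  rw [hrfl]
  rw [Polynomial.eval_eq_sum_range' (n := a.natDegree + 1)
    (lt_of_le_of_lt Polynomial.natDegree_map_le (Nat.lt_succ_self _))]
  apply Finset.sum_congr rfl
  intro m _
  rw [Polynomial.coeff_map]
  simp


/-! ### the trace polynomial -/

def Fpoly (k : ℕ) : Polynomial ℝ :=
  ∑ m ∈ Finset.range ((Q a1 a2 a3 k 0).natDegree + 1),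
    (Q a1 a2 a3 k 0).coeff m
      * (Faul m).comp (Polynomial.C 2 * Polynomial.X + Polynomial.C 1)

lemma Fpoly_eval_nat (k s : ℕ) :
    (Fpoly a1 a2 a3 k).eval ((s : ℕ) : ℝ)
      = ∑ i ∈ Finset.range (2 * s + 1), ev (Q a1 a2 a3 k 0) s i := by
  rw [Fpoly, Polynomial.eval_finset_sum]
  have hterm : ∀ m ∈ Finset.range ((Q a1 a2 a3 k 0).natDegree + 1),
      (((Q a1 a2 a3 k 0).coeff m)
        * (Faul m).comp (Polynomial.C 2 * Polynomial.X + Polynomial.C 1)).eval ((s : ℕ) : ℝ)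
      = ∑ i ∈ Finset.range (2 * s + 1),
          ((Q a1 a2 a3 k 0).coeff m).eval ((s : ℕ) : ℝ) * ((i : ℕ) : ℝ) ^ m := by
    intro m _
    rw [Polynomial.eval_mul, Polynomial.eval_comp]
    rw [Polynomial.eval_add, Polynomial.eval_mul, Polynomial.eval_C, Polynomial.eval_X,
      Polynomial.eval_C]
    have hcast : 2 * ((s : ℕ) : ℝ) + 1 = ((2 * s + 1 : ℕ) : ℝ) := by push_cast; ring
    rw [hcast, Faul_eval_nat, Finset.mul_sum]
  rw [Finset.sum_congr rfl hterm, Finset.sum_comm]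
  apply Finset.sum_congr rfl
  intro i _
  rw [ev_eq_sum]

lemma Fpoly_eval_neg_half (k : ℕ) : (Fpoly a1 a2 a3 k).eval (-(1/2) : ℝ) = 0 := by
  rw [Fpoly, Polynomial.eval_finset_sum]
  apply Finset.sum_eq_zero
  intro m _
  rw [Polynomial.eval_mul, Polynomial.eval_comp]
  rw [Polynomial.eval_add, Polynomial.eval_mul, Polynomial.eval_C, Polynomial.eval_X,
    Polynomial.eval_C]
  have : (2 : ℝ) * (-(1/2)) + 1 = 0 := by norm_num
  rw [this, Faul_eval_zero, mul_zero]

lemma Fpoly_eval_neg_one (k : ℕ) (hk : 1 ≤ k) : (Fpoly a1 a2 a3 k).eval (-1 : ℝ) = 0 := by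
  rw [Fpoly, Polynomial.eval_finset_sum]
  have hterm : ∀ m ∈ Finset.range ((Q a1 a2 a3 k 0).natDegree + 1),
      (((Q a1 a2 a3 k 0).coeff m)
        * (Faul m).comp (Polynomial.C 2 * Polynomial.X + Polynomial.C 1)).eval (-1 : ℝ)
      = -(((Q a1 a2 a3 k 0).coeff m).eval (-1 : ℝ) * (-1 : ℝ) ^ m) := by
    intro m _
    rw [Polynomial.eval_mul, Polynomial.eval_comp]
    rw [Polynomial.eval_add, Polynomial.eval_mul, Polynomial.eval_C, Polynomial.eval_X,
      Polynomial.eval_C]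
    have : (2 : ℝ) * (-1) + 1 = -1 := by norm_num
    rw [this, Faul_eval_neg_one]
    ring
  have hsum : ∑ m ∈ Finset.range ((Q a1 a2 a3 k 0).natDegree + 1),
      ((Q a1 a2 a3 k 0).coeff m).eval (-1 : ℝ) * (-1 : ℝ) ^ m
      = ev (Q a1 a2 a3 k 0) (-1) (-1) := (ev_eq_sum _ _ _).symm
  rw [Finset.sum_congr rfl hterm, Finset.sum_neg_distrib, hsum]
  obtain ⟨k', rfl⟩ : ∃ k', k = k' + 1 := ⟨k - 1, by omega⟩
  rw [key_vanish]
  ring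

lemma Hmat_zero_s : Hmat 0 a1 a2 a3 = 0 := by
  ext i i'
  have hi : i = i' := by
    apply Fin.ext
    have := i.isLt
    have := i'.isLt
    omega
  subst hi
  have h0 : (i : ℕ) = 0 := by have := i.isLt; omega
  simp [Hmat, h0]

lemma Fpoly_eval_zero (k : ℕ) (hk : 1 ≤ k) : (Fpoly a1 a2 a3 k).eval (0 : ℝ) = 0 := by
  have h := Fpoly_eval_nat a1 a2 a3 k 0
  rw [← trace_Mpow, ← trace_conj, Hmat_zero_s, zero_pow (by omega : k ≠ 0)] at h
  simpa using h

lemma Fpoly_natDegree (k : ℕ) : (Fpoly a1 a2 a3 k).natDegree ≤ 2 * k + 1 := by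
  rw [Fpoly]
  apply Polynomial.natDegree_sum_le_of_forall_le
  intro m _
  by_cases hm : (Q a1 a2 a3 k 0).coeff m = 0
  · rw [hm, zero_mul]
    simp
  · have hq := TD_Q a1 a2 a3 k 0 m hm
    apply le_trans Polynomial.natDegree_mul_le
    have hlin : (Polynomial.C (2 : ℝ) * Polynomial.X + Polynomial.C 1).natDegree ≤ 1 := by
      apply le_trans (Polynomial.natDegree_add_le _ _)
      simp only [Polynomial.natDegree_C, max_le_iff]
      constructor
      · apply le_trans (Polynomial.natDegree_C_mul_le _ _)
        simp [Polynomial.natDegree_X]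
      · omega
    have hcomp : ((Faul m).comp (Polynomial.C 2 * Polynomial.X + Polynomial.C 1)).natDegree
        ≤ m + 1 := by
      apply le_trans Polynomial.natDegree_comp_le
      calc (Faul m).natDegree * (Polynomial.C (2:ℝ) * Polynomial.X + Polynomial.C 1).natDegree
          ≤ (m + 1) * 1 := Nat.mul_le_mul (Faul_natDegree m) hlin
        _ = m + 1 := by ring
    omega

end QTop
end

/-- `tr(H_s^k)` is divisible by `s(s+1)(2s+1)` as a polynomial in `s`:
there is a polynomial `P` of degree `≤ 2k-2` with
`tr(H_s^k) = s(s+1)(2s+1) · P(s)` for all nonnegative integers `s`. -/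
theorem trace_Hmat_pow_divisible (k : ℕ) (hk : 1 ≤ k) (a1 a2 a3 : ℝ) :
    ∃ P : Polynomial ℝ, P.natDegree ≤ 2 * k - 2 ∧
      ∀ s : ℕ, Matrix.trace ((Hmat s a1 a2 a3) ^ k) =
        (s : ℝ) * ((s : ℝ) + 1) * (2 * (s : ℝ) + 1) * P.eval (s : ℝ) := by
  classical
  set F := QTop.Fpoly a1 a2 a3 k with hF
  have h0 : F.eval 0 = 0 := QTop.Fpoly_eval_zero a1 a2 a3 k hk
  have h1 : F.eval (-1) = 0 := QTop.Fpoly_eval_neg_one a1 a2 a3 k hk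
  have h2 : F.eval (-(1/2)) = 0 := QTop.Fpoly_eval_neg_half a1 a2 a3 k
  obtain ⟨F1, hF1⟩ : (Polynomial.X - Polynomial.C (0 : ℝ)) ∣ F :=
    Polynomial.dvd_iff_isRoot.mpr h0
  have h1' : F1.eval (-1) = 0 := by
    have hh := h1
    rw [hF1, Polynomial.eval_mul, Polynomial.eval_sub, Polynomial.eval_X,
      Polynomial.eval_C] at hh
    rcases mul_eq_zero.mp hh with hc | hc
    · norm_num at hc
    · exact hc
  obtain ⟨F2, hF2⟩ : (Polynomial.X - Polynomial.C (-1 : ℝ)) ∣ F1 :=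
    Polynomial.dvd_iff_isRoot.mpr h1'
  have h2' : F2.eval (-(1/2)) = 0 := by
    have hh := h2
    rw [hF1, hF2] at hh
    simp only [Polynomial.eval_mul, Polynomial.eval_sub, Polynomial.eval_X,
      Polynomial.eval_C] at hh
    rcases mul_eq_zero.mp hh with hc | hc
    · norm_num at hc
    · rcases mul_eq_zero.mp hc with hc2 | hc2
      · norm_num at hc2
      · exact hc2
  obtain ⟨F3, hF3⟩ : (Polynomial.X - Polynomial.C (-(1/2) : ℝ)) ∣ F2 :=
    Polynomial.dvd_iff_isRoot.mpr h2'
  refine ⟨Polynomial.C (1/2 : ℝ) * F3, ?_, ?_⟩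
  · by_cases h3 : F3 = 0
    · rw [h3, mul_zero]
      simp
    · have hdF : F.natDegree ≤ 2 * k + 1 := QTop.Fpoly_natDegree a1 a2 a3 k
      have hF2ne : F2 ≠ 0 := by
        rw [hF3]; exact mul_ne_zero (Polynomial.X_sub_C_ne_zero _) h3
      have hF1ne : F1 ≠ 0 := by
        rw [hF2]; exact mul_ne_zero (Polynomial.X_sub_C_ne_zero _) hF2ne
      have e1 : F.natDegree = F1.natDegree + 1 := by
        rw [hF1, Polynomial.natDegree_mul (Polynomial.X_sub_C_ne_zero _) hF1ne,
          Polynomial.natDegree_X_sub_C]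
        ring
      have e2 : F1.natDegree = F2.natDegree + 1 := by
        rw [hF2, Polynomial.natDegree_mul (Polynomial.X_sub_C_ne_zero _) hF2ne,
          Polynomial.natDegree_X_sub_C]
        ring
      have e3 : F2.natDegree = F3.natDegree + 1 := by
        rw [hF3, Polynomial.natDegree_mul (Polynomial.X_sub_C_ne_zero _) h3,
          Polynomial.natDegree_X_sub_C]
        ring
      have hP : (Polynomial.C (1/2 : ℝ) * F3).natDegree ≤ F3.natDegree := by
        apply le_trans Polynomial.natDegree_mul_le
        simp [Polynomial.natDegree_C]
      omega
  · intro s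
    have ht : Matrix.trace ((Hmat s a1 a2 a3) ^ k) = F.eval ((s : ℕ) : ℝ) := by
      rw [QTop.trace_conj, QTop.trace_Mpow, hF, QTop.Fpoly_eval_nat]
    rw [ht, hF1, hF2, hF3]
    simp only [Polynomial.eval_mul, Polynomial.eval_sub, Polynomial.eval_X, Polynomial.eval_C]
    ring
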